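/- Let (X, d) be an ultrametric space with value poset Γ. Then the function δ sending the precise ball B(x,y) to d(x,y) is a well-defined ultra-diameter on the family 𝓑_d of precise balls: (D1) if B(x,y) ⊆ B(u,w) then d(x,y) ≤ d(u,w); (D2) if B(x,y) ∩ B(u,w) ≠ ∅ and d(x,y) ≤ d(u,w) then B(x,y) ⊆ B(u,w). -/
import Mathlib

/-- The map `B(x,y) ↦ d(x,y)` is a well-defined ultra-diameter on the family of
precise balls of an ultrametric space: it does not depend on representatives,
it is increasing (D1), and it satisfies the ultrametric condition (D2). -/
theorem ultrametric_ultraDiameter {X Γ : Type*} [PartialOrder Γ] [OrderBot Γ]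
    (d : X → X → Γ)
    (hsymm : ∀ x y, d x y = d y x)
    (hbot : ∀ x y, d x y = ⊥ ↔ x = y)
    (htri : ∀ x y z γ, d x y ≤ γ → d y z ≤ γ → d x z ≤ γ) :
    (∀ x y u w : X, {z | d x z ≤ d x y} = {z | d u z ≤ d u w} → d x y = d u w) ∧
    (∀ x y u w : X, {z | d x z ≤ d x y} ⊆ {z | d u z ≤ d u w} → d x y ≤ d u w) ∧
    (∀ x y u w : X, ({z | d x z ≤ d x y} ∩ {z | d u z ≤ d u w}).Nonempty →
      d x y ≤ d u w → {z | d x z ≤ d x y} ⊆ {z | d u z ≤ d u w}) := by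
  have hxx : ∀ x : X, d x x = ⊥ := fun x => (hbot x x).mpr rfl
  have D1 : ∀ x y u w : X, {z | d x z ≤ d x y} ⊆ {z | d u z ≤ d u w} → d x y ≤ d u w := by
    intro x y u w h
    have hx : d u x ≤ d u w := h (by simp [Set.mem_setOf_eq, hxx x])
    have hy : d u y ≤ d u w := h (by simp [Set.mem_setOf_eq])
    exact htri x u y (d u w) ((hsymm x u) ▸ hx) hy
  refine ⟨fun x y u w h => le_antisymm (D1 x y u w h.subset) (D1 u w x y h.symm.subset),
    D1, ?_⟩
  intro x y u w ⟨a, hax, hau⟩ hle z hz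
  have h1 : d u x ≤ d u w := htri u a x (d u w) hau (le_trans ((hsymm a x) ▸ hax) hle)
  exact htri u x z (d u w) h1 (le_trans hz hle)
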